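/- Let a,b,c,d,a',b',c',d' ∈ ℤ be such that Q_{2,1} = conv{(0,0),(a,b),(c,d)} and Q_{2,2} = conv{(0,0),(a',b'),(c',d')} are integral 2-simplices in ℝ², and for n > 2 let Q_{n,1} and Q_{n,2} be their n-dimensional pyramids conv{0,(a,b,0,…,0),(c,d,0,…,0),e_3,…,e_n} and conv{0,(a',b',0,…,0),(c',d',0,…,0),e_3,…,e_n} in ℝⁿ. If Q_{2,1} and Q_{2,2} are GL_2(ℤ)-equidecomposable, then Q_{n,1} and Q_{n,2} are GL_n(ℤ)-equidecomposable. -/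

import Mathlib

open Pointwise

/-- An affine-unimodular transformation `v ↦ A v + b` with `A ∈ GL_n(ℤ)`, `b ∈ ℤⁿ`. -/
def IsUnimodularMap (n : ℕ) (U : (Fin n → ℝ) → (Fin n → ℝ)) : Prop :=
  ∃ (A : Matrix (Fin n) (Fin n) ℤ) (b : Fin n → ℤ),
    (A.det = 1 ∨ A.det = -1) ∧
    ∀ v, U v = (A.map (Int.cast : ℤ → ℝ)).mulVec v + fun i => (b i : ℝ)

/-- A relatively open simplex: the set of strictly positive convex combinations of an
affinely independent finite family of points. -/
def IsRelOpenSimplex (n : ℕ) (s : Set (Fin n → ℝ)) : Prop :=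
  ∃ (m : ℕ) (v : Fin (m + 1) → (Fin n → ℝ)),
    AffineIndependent ℝ v ∧
    s = {x | ∃ w : Fin (m + 1) → ℝ,
          (∀ i, 0 < w i) ∧ (∑ i, w i) = 1 ∧ x = ∑ i, w i • v i}

/-- `GL_n(ℤ)`-equidecomposability: matching partitions into relatively open simplices,
corresponding piecewise under affine-unimodular transformations. -/
def Equidecomposable (n : ℕ) (P Q : Set (Fin n → ℝ)) : Prop :=
  ∃ (r : ℕ) (Ps Qs : Fin r → Set (Fin n → ℝ))
    (Us : Fin r → (Fin n → ℝ) → (Fin n → ℝ)),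
      (∀ i, IsRelOpenSimplex n (Ps i)) ∧ (∀ i, IsRelOpenSimplex n (Qs i)) ∧
      (∀ i j, i ≠ j → Disjoint (Ps i) (Ps j)) ∧
      (∀ i j, i ≠ j → Disjoint (Qs i) (Qs j)) ∧
      P = ⋃ i, Ps i ∧ Q = ⋃ i, Qs i ∧
      (∀ i, IsUnimodularMap n (Us i)) ∧
      ∀ i, Us i '' Ps i = Qs i

/-- The planar point `(a, b)` embedded in ℝⁿ (zero in all further coordinates). -/
def planarPt (n : ℕ) (a b : ℤ) : Fin n → ℝ :=
  fun i => if (i : ℕ) = 0 then (a : ℝ) else if (i : ℕ) = 1 then (b : ℝ) else 0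

/-- Vertex set of the n-dimensional pyramid over `conv{(0,0),(a,b),(c,d)}`:
the points `(0,0)`, `(a,b)`, `(c,d)` embedded in ℝⁿ together with the standard basis
vectors `e₃, …, eₙ`. -/
def pyramidVerts (n : ℕ) (a b c d : ℤ) : Set (Fin n → ℝ) :=
  {planarPt n 0 0, planarPt n a b, planarPt n c d} ∪
    {x | ∃ i : Fin n, 2 ≤ (i : ℕ) ∧ x = Pi.single i 1}

/-- The n-dimensional pyramid over the 2-simplex `conv{(0,0),(a,b),(c,d)}`. -/
def pyramid (n : ℕ) (a b c d : ℤ) : Set (Fin n → ℝ) :=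
  convexHull ℝ (pyramidVerts n a b c d)

noncomputable section
namespace PyrAux
open Finset

/-- linear embedding ℝ² → ℝⁿ into first two coordinates -/
def embL (n : ℕ) : (Fin 2 → ℝ) →ₗ[ℝ] (Fin n → ℝ) where
  toFun x := fun k => if (k : ℕ) = 0 then x 0 else if (k : ℕ) = 1 then x 1 else 0
  map_add' x y := by
    funext k
    by_cases h0 : (k : ℕ) = 0 <;> by_cases h1 : (k : ℕ) = 1 <;> simp [h0, h1]
  map_smul' c x := by
    funext k
    by_cases h0 : (k : ℕ) = 0 <;> by_cases h1 : (k : ℕ) = 1 <;> simp [h0, h1]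

lemma embL_apply_lt {n : ℕ} (x : Fin 2 → ℝ) (k : Fin n) (hk : (k : ℕ) < 2) :
    embL n x k = x ⟨(k : ℕ), hk⟩ := by
  have : (k : ℕ) = 0 ∨ (k : ℕ) = 1 := by omega
  rcases this with h | h
  · rw [show (⟨(k : ℕ), hk⟩ : Fin 2) = 0 from Fin.ext h]
    simp [embL, h]
  · rw [show (⟨(k : ℕ), hk⟩ : Fin 2) = 1 from Fin.ext h]
    simp [embL, h]

lemma embL_apply_ge {n : ℕ} (x : Fin 2 → ℝ) (k : Fin n) (hk : 2 ≤ (k : ℕ)) :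
    embL n x k = 0 := by
  have h0 : (k : ℕ) ≠ 0 := by omega
  have h1 : (k : ℕ) ≠ 1 := by omega
  simp [embL, h0, h1]

/-- the set of strictly positive convex combinations of a finite family -/
def wset {d : ℕ} {ι : Type} [Fintype ι] (v : ι → (Fin d → ℝ)) : Set (Fin d → ℝ) :=
  {x | ∃ w : ι → ℝ, (∀ i, 0 < w i) ∧ (∑ i, w i) = 1 ∧ x = ∑ i, w i • v i}

lemma isRelOpenSimplex_wset {n : ℕ} {ι : Type} [Fintype ι] [Nonempty ι]
    {v : ι → (Fin n → ℝ)} (hv : AffineIndependent ℝ v) :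
    IsRelOpenSimplex n (wset v) := by
  obtain ⟨m, hm⟩ : ∃ m, Fintype.card ι = m + 1 :=
    ⟨Fintype.card ι - 1, (Nat.succ_pred_eq_of_pos Fintype.card_pos).symm⟩
  let e : Fin (m + 1) ≃ ι := (Fintype.equivFinOfCardEq hm).symm
  refine ⟨m, v ∘ e, hv.comp_embedding e.toEmbedding, ?_⟩
  ext x
  constructor
  · rintro ⟨w, hw, hs, rfl⟩
    refine ⟨w ∘ e, fun j => hw _, ?_, ?_⟩
    · rw [← hs]; exact Equiv.sum_comp e w
    · exact (Equiv.sum_comp e (fun i => w i • v i)).symm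
  · rintro ⟨w, hw, hs, rfl⟩
    refine ⟨w ∘ e.symm, fun i => hw _, ?_, ?_⟩
    · rw [← hs]; exact Equiv.sum_comp e.symm w
    · rw [← Equiv.sum_comp e (fun i => (w ∘ e.symm) i • v i)]
      simp

lemma map_combo {d : ℕ} {ι : Type} [Fintype ι] (M : Matrix (Fin d) (Fin d) ℝ)
    (c : Fin d → ℝ) (w : ι → ℝ) (hs : ∑ i, w i = 1) (v : ι → (Fin d → ℝ)) :
    M.mulVec (∑ i, w i • v i) + c = ∑ i, w i • (M.mulVec (v i) + c) := by
  have h1 : M.mulVec (∑ i, w i • v i) = ∑ i, w i • M.mulVec (v i) := by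
    rw [← Matrix.mulVecLin_apply]
    rw [map_sum]
    simp [Matrix.mulVecLin_apply]
  rw [h1]
  have h2 : ∑ i, w i • (M.mulVec (v i) + c) = (∑ i, w i • M.mulVec (v i)) + (∑ i, w i) • c := by
    rw [Finset.sum_smul]
    rw [← Finset.sum_add_distrib]
    simp [smul_add]
  rw [h2, hs, one_smul]

lemma wset_image {d : ℕ} {ι : Type} [Fintype ι] (f : (Fin d → ℝ) → (Fin d → ℝ))
    (M : Matrix (Fin d) (Fin d) ℝ) (c : Fin d → ℝ)
    (hf : ∀ x, f x = M.mulVec x + c) (v : ι → (Fin d → ℝ)) :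
    f '' wset v = wset (f ∘ v) := by
  ext x
  constructor
  · rintro ⟨y, ⟨w, hw, hs, rfl⟩, rfl⟩
    refine ⟨w, hw, hs, ?_⟩
    rw [hf, map_combo M c w hs v]
    simp only [Function.comp]
    congr 1; funext i; rw [hf]
  · rintro ⟨w, hw, hs, rfl⟩
    refine ⟨∑ i, w i • v i, ⟨w, hw, hs, rfl⟩, ?_⟩
    rw [hf, map_combo M c w hs v]
    congr 1; funext i; rw [Function.comp, hf]

lemma affineIndependent_map {d : ℕ} {ι : Type} (M : Matrix (Fin d) (Fin d) ℝ)
    (c : Fin d → ℝ) (hM : IsUnit M.det) (f : (Fin d → ℝ) → (Fin d → ℝ))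
    (hf : ∀ x, f x = M.mulVec x + c) {v : ι → (Fin d → ℝ)}
    (hv : AffineIndependent ℝ v) : AffineIndependent ℝ (f ∘ v) := by
  rw [affineIndependent_iff] at hv ⊢
  intro s w h0 hsum
  apply hv s w h0
  have key : ∑ e ∈ s, w e • (f ∘ v) e = M.mulVec (∑ e ∈ s, w e • v e) + (∑ e ∈ s, w e) • c := by
    have h1 : M.mulVec (∑ e ∈ s, w e • v e) = ∑ e ∈ s, w e • M.mulVec (v e) := by
      rw [← Matrix.mulVecLin_apply, map_sum]
      simp [Matrix.mulVecLin_apply]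
    rw [h1, Finset.sum_smul, ← Finset.sum_add_distrib]
    refine Finset.sum_congr rfl fun e _ => ?_
    rw [Function.comp, hf, smul_add]
  rw [key, h0, zero_smul, add_zero] at hsum
  have := congrArg (M⁻¹.mulVec) hsum
  rwa [Matrix.mulVec_mulVec, Matrix.nonsing_inv_mul M hM, Matrix.one_mulVec,
    Matrix.mulVec_zero] at this



variable {n : ℕ}

/-- coordinate of a weighted sum of basis vectors indexed by a finset -/
lemma single_sum_coord {S : Finset (Fin n)} (u : {k // k ∈ S} → ℝ) (k : Fin n) :
    (∑ j : {k // k ∈ S}, u j • (Pi.single (j : Fin n) (1 : ℝ) : Fin n → ℝ)) k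
      = if h : k ∈ S then u ⟨k, h⟩ else 0 := by
  rw [Finset.sum_apply]
  have hterm : ∀ j : {k // k ∈ S}, (u j • (Pi.single (j : Fin n) (1 : ℝ) : Fin n → ℝ)) k
      = if k = (j : Fin n) then u j else 0 := by
    intro j
    rw [Pi.smul_apply, Pi.single_apply]
    by_cases h : k = (j : Fin n) <;> simp [h]
  simp_rw [hterm]
  by_cases h : k ∈ S
  · rw [dif_pos h]
    rw [Fintype.sum_eq_single (⟨k, h⟩ : {k // k ∈ S})]
    · simp
    · intro j hj
      rw [if_neg]
      intro hc
      exact hj (Subtype.ext hc.symm)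
  · rw [dif_neg h]
    apply Finset.sum_eq_zero
    intro j _
    rw [if_neg]
    intro hc
    exact h (by rw [hc]; exact j.2)

def joined {ι : Type} (v : ι → (Fin 2 → ℝ)) (S : Finset (Fin n)) :
    ι ⊕ {k // k ∈ S} → (Fin n → ℝ) :=
  Sum.elim (fun j => embL n (v j)) (fun k => Pi.single (k : Fin n) (1 : ℝ))

lemma joined_affineIndependent (hn : 2 < n) {ι : Type} [Fintype ι]
    {v : ι → (Fin 2 → ℝ)} (hv : AffineIndependent ℝ v)
    {S : Finset (Fin n)} (hS : ∀ k ∈ S, 2 ≤ (k : ℕ)) :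
    AffineIndependent ℝ (joined v S) := by
  classical
  rw [affineIndependent_iff]
  intro s w hw0 hsum e he
  -- extend weights by zero
  set w' : ι ⊕ {k // k ∈ S} → ℝ := fun e => if e ∈ s then w e else 0 with hw'
  have hsum_univ : ∑ e, w' e = 0 := by
    rw [← hw0]
    rw [Finset.sum_ite_mem]
    simp
  have hcombo_univ : ∑ e, w' e • joined v S e = 0 := by
    rw [← hsum]
    have hterm : ∀ e, w' e • joined v S e
        = if e ∈ s then w e • joined v S e else 0 := by
      intro e
      by_cases h : e ∈ s <;> simp [hw', h]
    simp_rw [hterm]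
    rw [Finset.sum_ite_mem, Finset.univ_inter]
  -- u part is zero
  have hu : ∀ j : {k // k ∈ S}, w' (Sum.inr j) = 0 := by
    intro j
    have := congrFun hcombo_univ (j : Fin n)
    rw [Fintype.sum_sum_type] at this
    simp only [joined, Sum.elim_inl, Sum.elim_inr] at this
    rw [Pi.add_apply, Finset.sum_apply] at this
    have h1 : ∑ a : ι, (w' (Sum.inl a) • embL n (v a)) ((j : Fin n)) = 0 := by
      apply Finset.sum_eq_zero
      intro a _
      rw [Pi.smul_apply, embL_apply_ge _ _ (hS _ j.2)]
      simp
    rw [h1, single_sum_coord (fun j => w' (Sum.inr j)) (j : Fin n)] at this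
    rw [dif_pos j.2] at this
    simpa using this
  -- base part
  have hW0 : ∑ j : ι, w' (Sum.inl j) = 0 := by
    rw [Fintype.sum_sum_type] at hsum_univ
    rw [Finset.sum_congr rfl (fun j _ => hu j)] at hsum_univ
    simpa using hsum_univ
  have hWc : ∑ j : ι, w' (Sum.inl j) • v j = 0 := by
    funext l
    have := congrFun hcombo_univ ⟨(l : ℕ), lt_trans l.is_lt hn⟩
    rw [Fintype.sum_sum_type] at this
    simp only [joined, Sum.elim_inl, Sum.elim_inr] at this
    rw [Pi.add_apply, Finset.sum_apply, Finset.sum_apply] at this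
    have h2 : ∑ j : {k // k ∈ S}, (w' (Sum.inr j) • (Pi.single ((j : Fin n)) (1:ℝ) : Fin n → ℝ))
        (⟨(l : ℕ), lt_trans l.is_lt hn⟩ : Fin n) = 0 := by
      apply Finset.sum_eq_zero
      intro j _
      rw [hu j]
      simp
    rw [h2, add_zero] at this
    simp only [Pi.zero_apply] at this
    rw [Finset.sum_apply, Pi.zero_apply, ← this]
    apply Finset.sum_congr rfl
    intro j _
    rw [Pi.smul_apply, Pi.smul_apply, embL_apply_lt _ _ (by exact l.is_lt)]
  have hWz : ∀ j : ι, w' (Sum.inl j) = 0 := by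
    intro j
    exact affineIndependent_iff.mp hv Finset.univ (fun j => w' (Sum.inl j))
      hW0 hWc j (Finset.mem_univ j)
  -- conclude
  have : w' e = w e := by simp [hw', he]
  rw [← this]
  cases e with
  | inl j => exact hWz j
  | inr j => exact hu j

/-- the pieces of the pyramid decomposition -/
def pieceFam {r : ℕ} (m : Fin r → ℕ) (v : ∀ i, Fin (m i + 1) → (Fin 2 → ℝ))
    (o : Option (Fin r)) (S : Finset (Fin n)) : Set (Fin n → ℝ) :=
  match o with
  | some i => wset (joined (v i) S)
  | none => wset (joined (fun j : Empty => (j.elim : Fin 2 → ℝ)) S)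

lemma wset_joined_coords (hn : 2 < n) {ι : Type} [Fintype ι] {v : ι → Fin 2 → ℝ}
    {S : Finset (Fin n)} (hS : ∀ k ∈ S, 2 ≤ (k : ℕ)) {x : Fin n → ℝ}
    (hx : x ∈ wset (joined v S)) :
    ∃ (w : ι → ℝ) (u : {k // k ∈ S} → ℝ),
      (∀ j, 0 < w j) ∧ (∀ k, 0 < u k) ∧ (∑ j, w j) + (∑ k, u k) = 1 ∧
      x = (∑ j, w j • embL n (v j)) + (∑ k : {k // k ∈ S}, u k • (Pi.single (k : Fin n) (1:ℝ) : Fin n → ℝ)) ∧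
      (∑ k ∈ S, x k = ∑ k : {k // k ∈ S}, u k) ∧
      (∀ k : Fin n, 2 ≤ (k : ℕ) → x k = (if h : k ∈ S then u ⟨k, h⟩ else 0)) ∧
      (∀ l : Fin 2, x ⟨(l : ℕ), lt_trans l.is_lt hn⟩ = ∑ j, w j * v j l) := by
  obtain ⟨W, hW, hWsum, rfl⟩ := hx
  refine ⟨fun j => W (Sum.inl j), fun k => W (Sum.inr k), fun j => hW _, fun k => hW _, ?_, ?_, ?_, ?_, ?_⟩
  · rw [← hWsum, Fintype.sum_sum_type]
  · rw [Fintype.sum_sum_type]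
    rfl
  all_goals {
    have hco : ∀ k : Fin n, (∑ e : ι ⊕ {k // k ∈ S}, W e • joined v S e) k
        = (∑ j, W (Sum.inl j) • embL n (v j)) k
          + (if h : k ∈ S then W (Sum.inr ⟨k, h⟩) else 0) := by
      intro k
      rw [Fintype.sum_sum_type, Pi.add_apply]
      simp only [joined, Sum.elim_inl, Sum.elim_inr]
      rw [single_sum_coord (fun k => W (Sum.inr k)) k]
    have hA : ∀ k : Fin n, 2 ≤ (k : ℕ) → (∑ j, W (Sum.inl j) • embL n (v j)) k = 0 := by
      intro k hk
      rw [Finset.sum_apply]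
      apply Finset.sum_eq_zero
      intro j _
      rw [Pi.smul_apply, embL_apply_ge _ _ hk, smul_zero]
    first
    | -- sum over S
      (rw [← Finset.sum_attach S, Finset.univ_eq_attach]
       apply Finset.sum_congr rfl
       intro k _
       rw [hco, hA _ (hS _ k.2), zero_add, dif_pos k.2])
    | -- coords ≥ 2
      (intro k hk
       rw [hco k, hA k hk, zero_add])
    | -- proj coords
      (intro l
       rw [hco, dif_neg (fun hmem => by have := hS _ hmem; simp at this; omega), add_zero,
         Finset.sum_apply]
       apply Finset.sum_congr rfl
       intro j _
       rw [Pi.smul_apply, embL_apply_lt _ _ (by simp [l.is_lt]), smul_eq_mul])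
  }

/-- the apex vertex set -/
def Epts (n : ℕ) : Set (Fin n → ℝ) :=
  {x | ∃ i : Fin n, 2 ≤ (i : ℕ) ∧ x = Pi.single i 1}

/-- the closed apex simplex, described by coordinates -/
def deltaSet (n : ℕ) : Set (Fin n → ℝ) :=
  {x | (∀ k, 0 ≤ x k) ∧ (∀ k : Fin n, (k : ℕ) < 2 → x k = 0) ∧
    ∑ k ∈ Finset.univ.filter (fun k : Fin n => 2 ≤ (k : ℕ)), x k = 1}

lemma delta_eq (hn : 2 < n) : convexHull ℝ (Epts n) = deltaSet n := by
  apply le_antisymm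
  · apply convexHull_min
    · rintro x ⟨i, hi, rfl⟩
      refine ⟨fun k => ?_, fun k hk => ?_, ?_⟩
      · rw [Pi.single_apply]; split_ifs <;> norm_num
      · rw [Pi.single_apply, if_neg]; intro hc; rw [hc] at hk; omega
      · rw [Finset.sum_congr rfl (fun k _ => Pi.single_apply i (1:ℝ) k)]
        rw [Finset.sum_ite_eq' (Finset.univ.filter (fun k : Fin n => 2 ≤ (k : ℕ))) i (fun _ => (1:ℝ))]
        rw [if_pos]
        simp [hi]
    · rintro x hx y hy a b ha hb hab
      refine ⟨fun k => add_nonneg (mul_nonneg ha (hx.1 k)) (mul_nonneg hb (hy.1 k)),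
        fun k hk => by simp [Pi.add_apply, hx.2.1 k hk, hy.2.1 k hk], ?_⟩
      simp only [Pi.add_apply, Pi.smul_apply, smul_eq_mul]
      rw [Finset.sum_add_distrib, ← Finset.mul_sum, ← Finset.mul_sum, hx.2.2, hy.2.2]
      simpa using hab
  · intro x hx
    obtain ⟨hpos, hlow, hsum⟩ := hx
    have hrepr : x = ∑ k ∈ Finset.univ.filter (fun k : Fin n => 2 ≤ (k : ℕ)),
        x k • (Pi.single k (1:ℝ) : Fin n → ℝ) := by
      funext k'
      rw [Finset.sum_apply]
      have hterm : ∀ k, (x k • (Pi.single k (1:ℝ) : Fin n → ℝ)) k' = if k' = k then x k else 0 := by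
        intro k
        rw [Pi.smul_apply, Pi.single_apply]
        split_ifs <;> simp
      rw [Finset.sum_congr rfl (fun k _ => hterm k)]
      rw [Finset.sum_ite_eq (Finset.univ.filter (fun k : Fin n => 2 ≤ (k : ℕ))) k' x]
      split_ifs with h
      · rfl
      · simp only [Finset.mem_filter, Finset.mem_univ, true_and, not_le] at h
        exact hlow k' h
    rw [hrepr]
    rw [← Finset.centerMass_eq_of_sum_1 _ _ hsum]
    apply Finset.centerMass_mem_convexHull
    · intro k _; exact hpos k
    · rw [hsum]; norm_num
    · intro k hk
      simp only [Finset.mem_filter, Finset.mem_univ, true_and] at hk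
      exact ⟨k, hk, rfl⟩

lemma pyramidVerts_two (a b c d : ℤ) :
    pyramidVerts 2 a b c d = {planarPt 2 0 0, planarPt 2 a b, planarPt 2 c d} := by
  rw [pyramidVerts]
  have : {x : Fin 2 → ℝ | ∃ i : Fin 2, 2 ≤ (i : ℕ) ∧ x = Pi.single i 1} = ∅ := by
    ext x
    simp only [Set.mem_setOf_eq, Set.mem_empty_iff_false, iff_false]
    rintro ⟨i, hi, -⟩
    omega
  rw [this, Set.union_empty]

lemma embL_planarPt (hn : 2 < n) (u w : ℤ) :
    embL n (planarPt 2 u w) = planarPt n u w := by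
  funext k
  by_cases h0 : (k : ℕ) = 0
  · rw [show embL n (planarPt 2 u w) k = planarPt 2 u w 0 by simp [embL, h0]]
    simp [planarPt, h0]
  · by_cases h1 : (k : ℕ) = 1
    · rw [show embL n (planarPt 2 u w) k = planarPt 2 u w 1 by simp [embL, h0, h1]]
      simp [planarPt, h0, h1]
    · rw [show embL n (planarPt 2 u w) k = 0 by simp [embL, h0, h1]]
      simp [planarPt, h0, h1]

lemma pyramid_n_eq (hn : 2 < n) (a b c d : ℤ) :
    pyramid n a b c d = convexJoin ℝ (embL n '' pyramid 2 a b c d) (deltaSet n) := by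
  have hverts : pyramidVerts n a b c d = (embL n '' pyramidVerts 2 a b c d) ∪ Epts n := by
    rw [pyramidVerts_two]
    rw [show ((embL n) '' {planarPt 2 0 0, planarPt 2 a b, planarPt 2 c d} : Set (Fin n → ℝ))
      = {embL n (planarPt 2 0 0), embL n (planarPt 2 a b), embL n (planarPt 2 c d)} by
        simp [Set.image_insert_eq]]
    rw [embL_planarPt hn, embL_planarPt hn, embL_planarPt hn]
    rfl
  rw [pyramid, hverts, convexHull_union, ← LinearMap.image_convexHull, delta_eq hn]
  · rfl
  · exact ⟨embL n (planarPt 2 0 0), ⟨planarPt 2 0 0, by simp [pyramidVerts_two], rfl⟩⟩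
  · exact ⟨Pi.single (⟨2, hn⟩ : Fin n) 1, ⟨⟨2, hn⟩, by norm_num, rfl⟩⟩

lemma delta_repr {q : Fin n → ℝ} (hq : q ∈ deltaSet n) :
    ∃ S : Finset (Fin n), (∀ k ∈ S, 2 ≤ (k : ℕ)) ∧ S.Nonempty ∧
      (∀ k : {k // k ∈ S}, 0 < q (k : Fin n)) ∧ (∑ k : {k // k ∈ S}, q (k : Fin n)) = 1 ∧
      (∑ k : {k // k ∈ S}, q (k : Fin n) • (Pi.single (k : Fin n) (1:ℝ) : Fin n → ℝ)) = q := by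
  classical
  obtain ⟨hpos, hlow, hsum⟩ := hq
  set KF := Finset.univ.filter (fun k : Fin n => 2 ≤ (k : ℕ)) with hKF
  refine ⟨KF.filter (fun k => q k ≠ 0), ?_, ?_, ?_, ?_, ?_⟩
  · intro k hk
    simp only [KF, Finset.mem_filter, Finset.mem_univ, true_and] at hk
    exact hk.1
  · rw [Finset.filter_nonempty_iff]
    by_contra hcon
    push_neg at hcon
    rw [Finset.sum_congr rfl (fun k hk => hcon k hk)] at hsum
    simp at hsum
  · rintro ⟨k, hk⟩
    simp only [KF, Finset.mem_filter, Finset.mem_univ, true_and] at hk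
    exact lt_of_le_of_ne (hpos k) (Ne.symm hk.2)
  · rw [Finset.univ_eq_attach, Finset.sum_attach _ q, ← hsum]
    apply Finset.sum_subset (Finset.filter_subset _ _)
    intro k hk hk2
    rw [Finset.mem_filter, not_and] at hk2
    exact not_not.mp (hk2 hk)
  · funext k'
    rw [single_sum_coord (fun k => q (k : Fin n)) k']
    split_ifs with h
    · rfl
    · by_cases hlt : (k' : ℕ) < 2
      · exact (hlow k' hlt).symm
      · have hk' : k' ∈ KF := by
          simp only [KF, Finset.mem_filter, Finset.mem_univ, true_and]; omega
        rw [Finset.mem_filter, not_and] at h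
        exact (not_not.mp (h hk')).symm

lemma planarPt00_mem (a b c d : ℤ) : planarPt 2 0 0 ∈ pyramid 2 a b c d :=
  subset_convexHull ℝ _ (by rw [pyramidVerts_two]; exact Set.mem_insert _ _)

lemma smul_pull {d : ℕ} {ι : Type} [Fintype ι] (t : ℝ) (w : ι → ℝ) (Y : ι → (Fin d → ℝ)) :
    ∑ j, (w j * t) • Y j = t • ∑ j, w j • Y j := by
  rw [Finset.smul_sum]
  refine Finset.sum_congr rfl fun j _ => ?_
  rw [smul_smul, mul_comm]

lemma union_pieces {r : ℕ} (hn : 2 < n) {a b c d : ℤ} (m : Fin r → ℕ)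
    (v : ∀ i, Fin (m i + 1) → (Fin 2 → ℝ))
    (hcover : pyramid 2 a b c d = ⋃ i, wset (v i)) :
    pyramid n a b c d
      = ⋃ p : {p : Option (Fin r) × Finset (Fin n) //
          (∀ k ∈ p.2, 2 ≤ (k : ℕ)) ∧ (p.1 = none → p.2.Nonempty)},
          pieceFam m v p.1.1 p.1.2 := by
  classical
  rw [pyramid_n_eq hn]
  ext x
  constructor
  · intro hx
    rw [mem_convexJoin] at hx
    obtain ⟨p', ⟨p, hp, rfl⟩, q, hq, θ, τ, hθ, hτ, hθτ, rfl⟩ := hx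
    rw [hcover, Set.mem_iUnion] at hp
    obtain ⟨i, w, hw, hwsum, rfl⟩ := hp
    obtain ⟨S, hSsub, hSne, hqpos, hq1, hq2⟩ := delta_repr hq
    rw [Set.mem_iUnion]
    by_cases hτ0 : τ = 0
    · -- x = embL p, use piece (some i, ∅)
      refine ⟨⟨(some i, (∅ : Finset (Fin n))), by simp, by simp⟩, ?_⟩
      show _ ∈ wset (joined (v i) (∅ : Finset (Fin n)))
      haveI : IsEmpty ({k // k ∈ (∅ : Finset (Fin n))}) := by
        exact ⟨fun k => Finset.notMem_empty _ k.2⟩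
      refine ⟨Sum.elim w (fun k => 1), fun e => ?_, ?_, ?_⟩
      · cases e with
        | inl j => exact hw j
        | inr k => norm_num
      · rw [Fintype.sum_sum_type]
        rw [Finset.univ_eq_empty (α := {k // k ∈ (∅ : Finset (Fin n))})]
        simpa using hwsum
      · have hθ1 : θ = 1 := by linarith
        rw [Fintype.sum_sum_type,
          Finset.univ_eq_empty (α := {k // k ∈ (∅ : Finset (Fin n))}), Finset.sum_empty,
          add_zero, hτ0, hθ1, zero_smul, add_zero, one_smul, map_sum]
        refine Finset.sum_congr rfl fun j _ => ?_
        rw [map_smul]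
        rfl
    · have hτpos : 0 < τ := lt_of_le_of_ne hτ (Ne.symm hτ0)
      by_cases hθ0 : θ = 0
      · -- x = q : piece (none, S)
        refine ⟨⟨(none, S), hSsub, fun _ => hSne⟩, ?_⟩
        show _ ∈ wset (joined (fun j : Empty => (j.elim : Fin 2 → ℝ)) S)
        refine ⟨Sum.elim (fun j : Empty => j.elim) (fun k => q (k : Fin n)),
          fun e => ?_, ?_, ?_⟩
        · cases e with
          | inl j => exact j.elim
          | inr k => exact hqpos k
        · rw [Fintype.sum_sum_type]
          simpa using hq1
        · have hτ1 : τ = 1 := by linarith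
          rw [Fintype.sum_sum_type, hθ0, hτ1, zero_smul, zero_add, one_smul]
          simp only [Finset.univ_eq_empty, Finset.sum_empty, zero_add, Sum.elim_inr, joined]
          exact hq2.symm
      · have hθpos : 0 < θ := lt_of_le_of_ne hθ (Ne.symm hθ0)
        refine ⟨⟨(some i, S), hSsub, by simp⟩, ?_⟩
        show _ ∈ wset (joined (v i) S)
        refine ⟨Sum.elim (fun j => θ * w j) (fun k => τ * q (k : Fin n)),
          fun e => ?_, ?_, ?_⟩
        · cases e with
          | inl j => exact mul_pos hθpos (hw j)
          | inr k => exact mul_pos hτpos (hqpos k)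
        · rw [Fintype.sum_sum_type]
          simp only [Sum.elim_inl, Sum.elim_inr]
          rw [← Finset.mul_sum, ← Finset.mul_sum, hwsum, hq1, mul_one, mul_one, hθτ]
        · rw [Fintype.sum_sum_type]
          simp only [Sum.elim_inl, Sum.elim_inr, joined]
          have h1 : ∑ j, (θ * w j) • embL n (v i j) = θ • embL n (∑ j, w j • v i j) := by
            rw [map_sum,
              Finset.sum_congr rfl (fun j (_ : j ∈ (Finset.univ : Finset (Fin (m i + 1)))) =>
                map_smul (embL n) (w j) (v i j)),
              ← smul_pull θ w (fun j => embL n (v i j))]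
            exact Finset.sum_congr rfl fun j _ => by rw [mul_comm]
          have h2 : ∑ k : {k // k ∈ S},
              (τ * q (k : Fin n)) • (Pi.single (k : Fin n) (1:ℝ) : Fin n → ℝ) = τ • q := by
            conv_rhs => rw [← hq2]
            rw [Finset.smul_sum]
            exact Finset.sum_congr rfl fun k _ => (smul_smul τ _ _).symm
          rw [h1, h2]
  · intro hx
    rw [Set.mem_iUnion] at hx
    obtain ⟨⟨⟨o, S⟩, hSsub, hSnep⟩, hx⟩ := hx
    rw [mem_convexJoin]
    cases o with
    | none =>
      have hx' : x ∈ wset (joined (fun j : Empty => (j.elim : Fin 2 → ℝ)) S) := hx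
      obtain ⟨w, u, hw, hu, hsum1, hcombo, hsumS, hge, hproj⟩ := wset_joined_coords hn hSsub hx'
      have hxlow : ∀ k : Fin n, (k : ℕ) < 2 → x k = 0 := by
        intro k hk
        have := hproj ⟨(k : ℕ), hk⟩
        simp only [Finset.univ_eq_empty, Finset.sum_empty] at this
        simpa using this
      have hxdelta : x ∈ deltaSet n := by
        refine ⟨fun k => ?_, hxlow, ?_⟩
        · by_cases h2 : 2 ≤ (k : ℕ)
          · rw [hge k h2]
            split_ifs with h
            · exact le_of_lt (hu _)
            · exact le_refl 0
          · rw [hxlow k (by omega)]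
        · have hS1 : ∑ k ∈ S, x k = 1 := by
            rw [hsumS]
            simp only [Finset.univ_eq_empty, Finset.sum_empty, zero_add] at hsum1
            exact hsum1
          rw [← hS1]
          symm
          apply Finset.sum_subset
          · intro k hk
            simp only [Finset.mem_filter, Finset.mem_univ, true_and]
            exact hSsub k hk
          · intro k hk hk2
            rw [hge k (by simp only [Finset.mem_filter, Finset.mem_univ, true_and] at hk; exact hk),
              dif_neg hk2]
      exact ⟨embL n (planarPt 2 0 0), ⟨planarPt 2 0 0, planarPt00_mem a b c d, rfl⟩, x, hxdelta,
        0, 1, le_refl 0, zero_le_one, by norm_num, by rw [zero_smul, one_smul, zero_add]⟩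
    | some i =>
      have hx' : x ∈ wset (joined (v i) S) := hx
      obtain ⟨w, u, hw, hu, hsum1, hcombo, hsumS, hge, hproj⟩ := wset_joined_coords hn hSsub hx'
      have ht : 0 < ∑ j, w j := Finset.sum_pos (fun j _ => hw j) Finset.univ_nonempty
      set t := ∑ j, w j with hts
      set p : Fin 2 → ℝ := ∑ j, (w j * t⁻¹) • v i j with hps
      have hpmem : p ∈ pyramid 2 a b c d := by
        rw [hcover, Set.mem_iUnion]
        exact ⟨i, fun j => w j * t⁻¹, fun j => mul_pos (hw j) (inv_pos.mpr ht),
          by rw [← Finset.sum_mul, mul_inv_cancel₀ (ne_of_gt ht)], rfl⟩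
      have hXembp : t • embL n p = ∑ j, w j • embL n (v i j) := by
        rw [hps, map_sum,
          Finset.sum_congr rfl (fun j (_ : j ∈ (Finset.univ : Finset (Fin (m i + 1)))) =>
            map_smul (embL n) (w j * t⁻¹) (v i j)),
          smul_pull t⁻¹ w (fun j => embL n (v i j)), smul_inv_smul₀ (ne_of_gt ht)]
      rcases S.eq_empty_or_nonempty with hSe | hSne'
      · subst hSe
        have hu0 : (∑ k, u k) = 0 :=
          Finset.sum_eq_zero fun k _ => absurd k.2 (Finset.notMem_empty _)
        have ht1 : t = 1 := by rw [hu0, add_zero] at hsum1; exact hsum1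
        have htail0 : (∑ k, u k • (Pi.single ((k : Fin n) : Fin n) (1:ℝ) : Fin n → ℝ)) = 0 :=
          Finset.sum_eq_zero fun k _ => absurd k.2 (Finset.notMem_empty _)
        have hx1 : x = embL n p := by
          rw [hcombo, htail0, add_zero, ← hXembp, ht1, one_smul]
        have hq0 : (Pi.single (⟨2, hn⟩ : Fin n) (1:ℝ) : Fin n → ℝ) ∈ deltaSet n := by
          rw [← delta_eq hn]
          exact subset_convexHull ℝ _ ⟨⟨2, hn⟩, by norm_num, rfl⟩
        exact ⟨embL n p, ⟨p, hpmem, rfl⟩, _, hq0,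
          1, 0, zero_le_one, le_refl 0, by norm_num, by rw [zero_smul, one_smul, add_zero, hx1]⟩
      · obtain ⟨k0, hk0⟩ := hSne'
        haveI : Nonempty ({k // k ∈ S}) := ⟨⟨k0, hk0⟩⟩
        have hσ : 0 < ∑ k : {k // k ∈ S}, u k := Finset.sum_pos (fun k _ => hu k) Finset.univ_nonempty
        set σ := ∑ k : {k // k ∈ S}, u k with hσs
        set tail := ∑ k : {k // k ∈ S}, u k • (Pi.single (k : Fin n) (1:ℝ) : Fin n → ℝ) with htail
        set q : Fin n → ℝ := σ⁻¹ • tail with hqs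
        have htailco : ∀ k : Fin n, tail k = if h : k ∈ S then u ⟨k, h⟩ else 0 := by
          intro k
          rw [htail]
          exact single_sum_coord u k
        have hqdelta : q ∈ deltaSet n := by
          refine ⟨fun k => ?_, fun k hk => ?_, ?_⟩
          · rw [hqs, Pi.smul_apply, htailco k, smul_eq_mul]
            apply mul_nonneg (inv_nonneg.mpr (le_of_lt hσ))
            split_ifs with h
            · exact le_of_lt (hu _)
            · exact le_refl 0
          · rw [hqs, Pi.smul_apply, htailco k, dif_neg (fun hc => by have := hSsub k hc; omega),
              smul_zero]
          · have : ∑ k ∈ Finset.univ.filter (fun k : Fin n => 2 ≤ (k : ℕ)), q k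
                = σ⁻¹ * ∑ k ∈ Finset.univ.filter (fun k : Fin n => 2 ≤ (k : ℕ)), tail k := by
              rw [Finset.mul_sum]
              exact Finset.sum_congr rfl fun k _ => by rw [hqs, Pi.smul_apply, smul_eq_mul]
            rw [this]
            have htsum : ∑ k ∈ Finset.univ.filter (fun k : Fin n => 2 ≤ (k : ℕ)), tail k = σ := by
              rw [show ∑ k ∈ Finset.univ.filter (fun k : Fin n => 2 ≤ (k : ℕ)), tail k
                  = ∑ k ∈ S, tail k by
                symm
                apply Finset.sum_subset
                · intro k hk
                  simp only [Finset.mem_filter, Finset.mem_univ, true_and]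
                  exact hSsub k hk
                · intro k _ hk2
                  rw [htailco k, dif_neg hk2]]
              rw [hσs, Finset.univ_eq_attach, ← Finset.sum_attach S (fun k => tail k)]
              refine Finset.sum_congr rfl fun k _ => ?_
              rw [htailco, dif_pos k.2]
            rw [htsum, inv_mul_cancel₀ (ne_of_gt hσ)]
        refine ⟨embL n p, ⟨p, hpmem, rfl⟩, q, hqdelta, t, σ, le_of_lt ht, le_of_lt hσ, hsum1, ?_⟩
        rw [hXembp, hqs, smul_inv_smul₀ (ne_of_gt hσ), htail, hcombo]

lemma support_of_mem (hn : 2 < n) {ι : Type} [Fintype ι] {v : ι → Fin 2 → ℝ}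
    {S : Finset (Fin n)} (hS : ∀ k ∈ S, 2 ≤ (k : ℕ)) {x : Fin n → ℝ}
    (hx : x ∈ wset (joined v S)) :
    ∀ k : Fin n, 2 ≤ (k : ℕ) → (0 < x k ↔ k ∈ S) := by
  obtain ⟨w, u, hw, hu, hsum1, hcombo, hsumS, hge, hproj⟩ := wset_joined_coords hn hS hx
  intro k hk
  rw [hge k hk]
  constructor
  · intro hpos
    by_contra hc
    rw [dif_neg hc] at hpos
    exact lt_irrefl 0 hpos
  · intro hmem
    rw [dif_pos hmem]
    exact hu _

lemma sum_of_none {r : ℕ} (hn : 2 < n) {m : Fin r → ℕ} {v : ∀ i, Fin (m i + 1) → (Fin 2 → ℝ)}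
    {S : Finset (Fin n)} (hS : ∀ k ∈ S, 2 ≤ (k : ℕ)) {x : Fin n → ℝ}
    (hx : x ∈ pieceFam m v none S) : ∑ k ∈ S, x k = 1 := by
  have hx' : x ∈ wset (joined (fun j : Empty => (j.elim : Fin 2 → ℝ)) S) := hx
  obtain ⟨w, u, hw, hu, hsum1, hcombo, hsumS, hge, hproj⟩ := wset_joined_coords hn hS hx'
  rw [hsumS]
  simpa using hsum1

lemma point_of_some {r : ℕ} (hn : 2 < n) {m : Fin r → ℕ} {v : ∀ i, Fin (m i + 1) → (Fin 2 → ℝ)}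
    {i : Fin r} {S : Finset (Fin n)} (hS : ∀ k ∈ S, 2 ≤ (k : ℕ)) {x : Fin n → ℝ}
    (hx : x ∈ pieceFam m v (some i) S) :
    (∑ k ∈ S, x k) < 1 ∧
    (fun l : Fin 2 => (1 - ∑ k ∈ S, x k)⁻¹ * x ⟨(l : ℕ), lt_trans l.is_lt hn⟩) ∈ wset (v i) := by
  have hx' : x ∈ wset (joined (v i) S) := hx
  obtain ⟨w, u, hw, hu, hsum1, hcombo, hsumS, hge, hproj⟩ := wset_joined_coords hn hS hx'
  have ht : 0 < ∑ j, w j := Finset.sum_pos (fun j _ => hw j) Finset.univ_nonempty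
  have htval : 1 - ∑ k ∈ S, x k = ∑ j, w j := by
    rw [hsumS, ← hsum1]
    ring
  constructor
  · rw [hsumS]
    have : 0 < ∑ j, w j := ht
    linarith [hsum1]
  · refine ⟨fun j => w j * (∑ j', w j')⁻¹,
      fun j => mul_pos (hw j) (inv_pos.mpr ht),
      by rw [← Finset.sum_mul, mul_inv_cancel₀ (ne_of_gt ht)], ?_⟩
    funext l
    rw [htval, hproj l, Finset.sum_apply, Finset.mul_sum]
    refine Finset.sum_congr rfl fun j _ => ?_
    rw [Pi.smul_apply, smul_eq_mul]
    ring

lemma pieces_disjoint {r : ℕ} (hn : 2 < n) (m : Fin r → ℕ)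
    (v : ∀ i, Fin (m i + 1) → (Fin 2 → ℝ))
    (hdisj : ∀ i j, i ≠ j → Disjoint (wset (v i)) (wset (v j)))
    {o o' : Option (Fin r)} {S S' : Finset (Fin n)}
    (hS : ∀ k ∈ S, 2 ≤ (k : ℕ)) (hS' : ∀ k ∈ S', 2 ≤ (k : ℕ))
    (hne : (o, S) ≠ (o', S')) :
    Disjoint (pieceFam m v o S) (pieceFam m v o' S') := by
  rw [Set.disjoint_left]
  intro x hx hx'
  have hxw : ∀ (o₀ : Option (Fin r)) (S₀ : Finset (Fin n)), x ∈ pieceFam m v o₀ S₀ →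
      ∀ k : Fin n, 2 ≤ (k : ℕ) → ((∀ k' ∈ S₀, 2 ≤ (k' : ℕ)) → (0 < x k ↔ k ∈ S₀)) := by
    intro o₀ S₀ hmem k hk hS₀
    cases o₀ with
    | none => exact support_of_mem hn hS₀ hmem k hk
    | some i => exact support_of_mem hn hS₀ hmem k hk
  have hSS : S = S' := by
    ext k
    by_cases hk : 2 ≤ (k : ℕ)
    · rw [← hxw o S hx k hk hS, hxw o' S' hx' k hk hS']
    · constructor
      · intro hmem; exact absurd (hS k hmem) hk
      · intro hmem; exact absurd (hS' k hmem) hk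
  subst hSS
  cases o with
  | none =>
    cases o' with
    | none => exact hne rfl
    | some i' =>
      have h1 := sum_of_none hn hS hx
      have h2 := (point_of_some hn hS' hx').1
      rw [h1] at h2
      exact lt_irrefl 1 h2
  | some i =>
    cases o' with
    | none =>
      have h1 := sum_of_none hn hS' hx'
      have h2 := (point_of_some hn hS hx).1
      rw [h1] at h2
      exact lt_irrefl 1 h2
    | some i' =>
      have hii : i ≠ i' := fun hc => hne (by rw [hc])
      have h1 := (point_of_some hn hS hx).2
      have h2 := (point_of_some hn hS' hx').2
      exact Set.disjoint_left.mp (hdisj i i' hii) h1 h2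

/-- lift of a 2×2 integer matrix (with translation b) to an n×n integer matrix -/
def liftMat (n : ℕ) (A : Matrix (Fin 2) (Fin 2) ℤ) (b : Fin 2 → ℤ) :
    Matrix (Fin n) (Fin n) ℤ :=
  fun k l =>
    if hk : (k : ℕ) < 2 then
      (if hl : (l : ℕ) < 2 then A ⟨(k : ℕ), hk⟩ ⟨(l : ℕ), hl⟩ else -(b ⟨(k : ℕ), hk⟩))
    else (if k = l then 1 else 0)

def liftVec (n : ℕ) (b : Fin 2 → ℤ) : Fin n → ℤ :=
  fun k => if hk : (k : ℕ) < 2 then b ⟨(k : ℕ), hk⟩ else 0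

def liftMap (n : ℕ) (A : Matrix (Fin 2) (Fin 2) ℤ) (b : Fin 2 → ℤ) :
    (Fin n → ℝ) → (Fin n → ℝ) :=
  fun x => ((liftMat n A b).map (Int.cast : ℤ → ℝ)).mulVec x + fun k => ((liftVec n b k : ℤ) : ℝ)

lemma liftMat_det (hn : 2 < n) (A : Matrix (Fin 2) (Fin 2) ℤ) (b : Fin 2 → ℤ) :
    (liftMat n A b).det = A.det := by
  have h2n : 2 + (n - 2) = n := by omega
  let e : Fin 2 ⊕ Fin (n - 2) ≃ Fin n := finSumFinEquiv.trans (finCongr h2n)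
  have he1 : ∀ j : Fin 2, ((e (Sum.inl j) : Fin n) : ℕ) = (j : ℕ) := by
    intro j; simp [e, finSumFinEquiv]
  have he2 : ∀ j : Fin (n - 2), ((e (Sum.inr j) : Fin n) : ℕ) = 2 + (j : ℕ) := by
    intro j; simp [e, finSumFinEquiv]
  have hsub : (liftMat n A b).submatrix e e
      = Matrix.fromBlocks A (Matrix.of fun k _ => -(b k)) 0 1 := by
    ext p q
    rcases p with j | j <;> rcases q with j' | j' <;>
      simp only [Matrix.submatrix_apply, liftMat, Matrix.fromBlocks_apply₁₁,
        Matrix.fromBlocks_apply₁₂, Matrix.fromBlocks_apply₂₁, Matrix.fromBlocks_apply₂₂]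
    · rw [dif_pos (by rw [he1]; exact j.is_lt), dif_pos (by rw [he1 j']; exact j'.is_lt)]
      exact congrArg₂ A (Fin.ext (he1 j)) (Fin.ext (he1 j'))
    · rw [dif_pos (by rw [he1]; exact j.is_lt), dif_neg (by rw [he2]; omega)]
      exact congrArg (fun z => -(b z)) (Fin.ext (he1 j))
    · rw [dif_neg (by rw [he2]; omega)]
      rw [if_neg]
      · rfl
      · intro hc
        have := congrArg Fin.val hc
        rw [he2, he1] at this
        omega
    · rw [dif_neg (by rw [he2]; omega)]
      by_cases hjj : j = j'
      · subst hjj; rw [if_pos rfl]; simp [Matrix.one_apply]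
      · rw [if_neg, Matrix.one_apply_ne hjj]
        intro hc
        apply hjj
        have := congrArg Fin.val hc
        rw [he2, he2] at this
        exact Fin.ext (by omega)
  rw [← Matrix.det_submatrix_equiv_self e (liftMat n A b), hsub,
    Matrix.det_fromBlocks_zero₂₁, Matrix.det_one, mul_one]

lemma liftMap_apply_ge (A : Matrix (Fin 2) (Fin 2) ℤ) (b : Fin 2 → ℤ) (x : Fin n → ℝ)
    (k : Fin n) (hk : 2 ≤ (k : ℕ)) : liftMap n A b x k = x k := by
  have hk' : ¬ (k : ℕ) < 2 := by omega
  show ((liftMat n A b).map _).mulVec x k + _ = x k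
  simp only [Matrix.mulVec, dotProduct, Matrix.map_apply, liftMat, liftVec,
    dif_neg hk']
  rw [Finset.sum_congr rfl (fun l (_ : l ∈ Finset.univ) => by
    rw [show (((if k = l then (1:ℤ) else 0) : ℤ) : ℝ) * x l = if k = l then x l else 0 by
      split_ifs <;> simp])]
  rw [Finset.sum_ite_eq Finset.univ k x, if_pos (Finset.mem_univ k)]
  simp

lemma liftMap_single (A : Matrix (Fin 2) (Fin 2) ℤ) (b : Fin 2 → ℤ)
    (k₀ : Fin n) (hk₀ : 2 ≤ (k₀ : ℕ)) :
    liftMap n A b (Pi.single k₀ (1:ℝ)) = Pi.single k₀ (1:ℝ) := by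
  funext k
  by_cases hk : (k : ℕ) < 2
  · show (((liftMat n A b).map (Int.cast : ℤ → ℝ)).mulVec (Pi.single k₀ (1:ℝ))) k
        + ((liftVec n b k : ℤ) : ℝ) = (Pi.single k₀ (1:ℝ) : Fin n → ℝ) k
    simp only [Matrix.mulVec, dotProduct, Matrix.map_apply]
    rw [Finset.sum_congr rfl (fun l (_ : l ∈ Finset.univ) => by
      rw [show ((liftMat n A b k l : ℤ) : ℝ) * (Pi.single k₀ (1:ℝ) : Fin n → ℝ) l
          = if l = k₀ then ((liftMat n A b k l : ℤ) : ℝ) else 0 by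
        rw [Pi.single_apply]
        split_ifs <;> simp])]
    rw [Finset.sum_ite_eq' Finset.univ k₀ (fun l => ((liftMat n A b k l : ℤ) : ℝ)),
      if_pos (Finset.mem_univ k₀)]
    rw [show liftMat n A b k k₀ = -(b ⟨(k : ℕ), hk⟩) by
      rw [liftMat]; rw [dif_pos hk, dif_neg (by omega)]]
    rw [show liftVec n b k = b ⟨(k : ℕ), hk⟩ by rw [liftVec, dif_pos hk]]
    rw [Pi.single_apply, if_neg (fun hc => by rw [hc] at hk; omega)]
    push_cast
    ring
  · rw [liftMap_apply_ge A b _ k (by omega)]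

lemma liftMap_emb (hn : 2 < n) (A : Matrix (Fin 2) (Fin 2) ℤ) (b : Fin 2 → ℤ)
    (x : Fin 2 → ℝ) :
    liftMap n A b (embL n x)
      = embL n ((A.map (Int.cast : ℤ → ℝ)).mulVec x + fun l => ((b l : ℤ) : ℝ)) := by
  have h2n : 2 + (n - 2) = n := by omega
  let e : Fin 2 ⊕ Fin (n - 2) ≃ Fin n := finSumFinEquiv.trans (finCongr h2n)
  have he1 : ∀ j : Fin 2, ((e (Sum.inl j) : Fin n) : ℕ) = (j : ℕ) := by
    intro j; simp [e, finSumFinEquiv]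
  have he2 : ∀ j : Fin (n - 2), ((e (Sum.inr j) : Fin n) : ℕ) = 2 + (j : ℕ) := by
    intro j; simp [e, finSumFinEquiv]
  funext k
  by_cases hk : (k : ℕ) < 2
  · show (((liftMat n A b).map (Int.cast : ℤ → ℝ)).mulVec (embL n x)) k
        + ((liftVec n b k : ℤ) : ℝ)
        = embL n ((A.map (Int.cast : ℤ → ℝ)).mulVec x + fun l => ((b l : ℤ) : ℝ)) k
    simp only [Matrix.mulVec, dotProduct, Matrix.map_apply]
    rw [← Equiv.sum_comp e (fun l => ((liftMat n A b k l : ℤ) : ℝ) * embL n x l),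
      Fintype.sum_sum_type]
    have hterm1 : ∀ j : Fin 2,
        ((liftMat n A b k (e (Sum.inl j)) : ℤ) : ℝ) * embL n x (e (Sum.inl j))
          = ((A ⟨(k : ℕ), hk⟩ j : ℤ) : ℝ) * x j := by
      intro j
      rw [embL_apply_lt x _ (by rw [he1]; exact j.is_lt)]
      rw [show liftMat n A b k (e (Sum.inl j)) = A ⟨(k : ℕ), hk⟩ j by
        rw [liftMat, dif_pos hk, dif_pos (by rw [he1]; exact j.is_lt)]
        exact congrArg (A ⟨(k : ℕ), hk⟩) (Fin.ext (he1 j))]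
      exact congrArg (fun z => ((A ⟨(k : ℕ), hk⟩ j : ℤ) : ℝ) * x z) (Fin.ext (he1 j))
    have hterm2 : ∀ j : Fin (n - 2),
        ((liftMat n A b k (e (Sum.inr j)) : ℤ) : ℝ) * embL n x (e (Sum.inr j)) = 0 := by
      intro j
      rw [embL_apply_ge x _ (by rw [he2]; omega), mul_zero]
    rw [Finset.sum_congr rfl (fun j _ => hterm1 j),
      Finset.sum_congr rfl (fun j _ => hterm2 j), Finset.sum_const_zero, add_zero]
    rw [show liftVec n b k = b ⟨(k : ℕ), hk⟩ by rw [liftVec, dif_pos hk]]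
    rw [embL_apply_lt _ k hk]
    simp only [Pi.add_apply, Matrix.mulVec, dotProduct, Matrix.map_apply]
  · rw [liftMap_apply_ge A b _ k (by omega), embL_apply_ge _ _ (by omega),
      embL_apply_ge _ _ (by omega)]

abbrev IdxT (n r : ℕ) : Type :=
  {p : Option (Fin r) × Finset (Fin n) //
    (∀ k ∈ p.2, 2 ≤ (k : ℕ)) ∧ (p.1 = none → p.2.Nonempty)}

noncomputable instance (n r : ℕ) : Fintype (IdxT n r) :=
  Fintype.ofFinite _

end PyrAux
end

open PyrAux

/-- If two integral 2-simplices `conv{(0,0),(a,b),(c,d)}` and `conv{(0,0),(a',b'),(c',d')}`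
are `GL_2(ℤ)`-equidecomposable, then for `n > 2` their n-dimensional pyramids are
`GL_n(ℤ)`-equidecomposable. -/
theorem pyramid_equidecomposable_of_base (a b c d a' b' c' d' : ℤ)
    (h1 : a * d - b * c ≠ 0) (h2 : a' * d' - b' * c' ≠ 0)
    (n : ℕ) (hn : 2 < n)
    (h : Equidecomposable 2 (pyramid 2 a b c d) (pyramid 2 a' b' c' d')) :
    Equidecomposable n (pyramid n a b c d) (pyramid n a' b' c' d') := by
  classical
  obtain ⟨r, Ps, Qs, Us, hPo, hQo, hPd, hQd, hPU, hQU, hUuni, hUim⟩ := h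
  choose m v hv hPs using hPo
  choose A bb hdet hUdef using hUuni
  set w : ∀ i, Fin (m i + 1) → (Fin 2 → ℝ) := fun i j => Us i (v i j) with hwdef
  have hPwset : ∀ i, Ps i = wset (v i) := hPs
  have hQwset : ∀ i, Qs i = wset (w i) := by
    intro i
    rw [← hUim i, hPwset i,
      wset_image (Us i) ((A i).map (Int.cast : ℤ → ℝ)) (fun l => ((bb i l : ℤ) : ℝ))
        (hUdef i) (v i)]
    rfl
  have hdetR : ∀ i, IsUnit ((A i).map (Int.cast : ℤ → ℝ)).det := by
    intro i
    have hh : (((A i).det : ℤ) : ℝ) = ((A i).map (Int.cast : ℤ → ℝ)).det := by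
      simpa using RingHom.map_det (Int.castRingHom ℝ) (A i)
    rw [← hh]
    rcases hdet i with hd | hd <;> rw [hd] <;> simp
  have hwv : ∀ i, AffineIndependent ℝ (w i) := fun i =>
    affineIndependent_map _ _ (hdetR i) (Us i) (hUdef i) (hv i)
  have hPdisj : ∀ i j, i ≠ j → Disjoint (wset (v i)) (wset (v j)) := by
    intro i j hij
    rw [← hPwset i, ← hPwset j]
    exact hPd i j hij
  have hQdisj : ∀ i j, i ≠ j → Disjoint (wset (w i)) (wset (w j)) := by
    intro i j hij
    rw [← hQwset i, ← hQwset j]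
    exact hQd i j hij
  have hPcover : pyramid 2 a b c d = ⋃ i, wset (v i) := by
    rw [hPU]; exact Set.iUnion_congr hPwset
  have hQcover : pyramid 2 a' b' c' d' = ⋃ i, wset (w i) := by
    rw [hQU]; exact Set.iUnion_congr hQwset
  set eI := (Fintype.equivFin (IdxT n r)).symm with heI
  refine ⟨Fintype.card (IdxT n r),
    fun t => pieceFam m v (eI t).1.1 (eI t).1.2,
    fun t => pieceFam m w (eI t).1.1 (eI t).1.2,
    fun t => Option.elim (eI t).1.1 id (fun i => liftMap n (A i) (bb i)),
    ?_, ?_, ?_, ?_, ?_, ?_, ?_, ?_⟩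
  · -- Ps pieces are open simplices
    intro t
    show IsRelOpenSimplex n (pieceFam m v (eI t).1.1 (eI t).1.2)
    rcases hsp : eI t with ⟨⟨o, S⟩, hS, hSne⟩
    cases o with
    | some i =>
      haveI : Nonempty (Fin (m i + 1) ⊕ {k // k ∈ S}) := ⟨Sum.inl 0⟩
      exact isRelOpenSimplex_wset (joined_affineIndependent hn (hv i) hS)
    | none =>
      obtain ⟨k0, hk0⟩ := hSne rfl
      haveI : Nonempty (Empty ⊕ {k // k ∈ S}) := ⟨Sum.inr ⟨k0, hk0⟩⟩
      exact isRelOpenSimplex_wset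
        (joined_affineIndependent hn (affineIndependent_of_subsingleton ℝ _) hS)
  · -- Qs pieces
    intro t
    show IsRelOpenSimplex n (pieceFam m w (eI t).1.1 (eI t).1.2)
    rcases hsp : eI t with ⟨⟨o, S⟩, hS, hSne⟩
    cases o with
    | some i =>
      haveI : Nonempty (Fin (m i + 1) ⊕ {k // k ∈ S}) := ⟨Sum.inl 0⟩
      exact isRelOpenSimplex_wset (joined_affineIndependent hn (hwv i) hS)
    | none =>
      obtain ⟨k0, hk0⟩ := hSne rfl
      haveI : Nonempty (Empty ⊕ {k // k ∈ S}) := ⟨Sum.inr ⟨k0, hk0⟩⟩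
      exact isRelOpenSimplex_wset
        (joined_affineIndependent hn (affineIndependent_of_subsingleton ℝ _) hS)
  · -- Ps disjoint
    intro t t' htt
    apply pieces_disjoint hn m v hPdisj (eI t).2.1 (eI t').2.1
    intro hc
    exact htt (eI.injective (Subtype.ext hc))
  · -- Qs disjoint
    intro t t' htt
    apply pieces_disjoint hn m w hQdisj (eI t).2.1 (eI t').2.1
    intro hc
    exact htt (eI.injective (Subtype.ext hc))
  · -- union P
    rw [union_pieces hn m v hPcover]
    ext x
    simp only [Set.mem_iUnion]
    constructor
    · rintro ⟨p, hp⟩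
      exact ⟨eI.symm p, by rw [Equiv.apply_symm_apply]; exact hp⟩
    · rintro ⟨t, ht⟩
      exact ⟨eI t, ht⟩
  · -- union Q
    rw [union_pieces hn m w hQcover]
    ext x
    simp only [Set.mem_iUnion]
    constructor
    · rintro ⟨p, hp⟩
      exact ⟨eI.symm p, by rw [Equiv.apply_symm_apply]; exact hp⟩
    · rintro ⟨t, ht⟩
      exact ⟨eI t, ht⟩
  · -- unimodularity
    intro t
    show IsUnimodularMap n (Option.elim (eI t).1.1 id (fun i => liftMap n (A i) (bb i)))
    cases ho : (eI t).1.1 with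
    | some i =>
      exact ⟨liftMat n (A i) (bb i), liftVec n (bb i),
        by rw [liftMat_det hn]; exact hdet i, fun x => rfl⟩
    | none =>
      refine ⟨1, 0, Or.inl Matrix.det_one, fun x => ?_⟩
      have : (1 : Matrix (Fin n) (Fin n) ℤ).map (Int.cast : ℤ → ℝ) = 1 :=
        Matrix.map_one _ Int.cast_zero Int.cast_one
      rw [this, Matrix.one_mulVec]
      funext k
      simp
  · -- images
    intro t
    show Option.elim (eI t).1.1 id (fun i => liftMap n (A i) (bb i)) '' pieceFam m v (eI t).1.1 (eI t).1.2
      = pieceFam m w (eI t).1.1 (eI t).1.2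
    rcases hsp : eI t with ⟨⟨o, S⟩, hS, hSne⟩
    cases o with
    | some i =>
      show liftMap n (A i) (bb i) '' pieceFam m v (some i) S = pieceFam m w (some i) S
      show liftMap n (A i) (bb i) '' wset (joined (v i) S) = wset (joined (w i) S)
      rw [wset_image (liftMap n (A i) (bb i))
        ((liftMat n (A i) (bb i)).map (Int.cast : ℤ → ℝ))
        (fun k => ((liftVec n (bb i) k : ℤ) : ℝ)) (fun x => rfl) (joined (v i) S)]
      have hfun : liftMap n (A i) (bb i) ∘ joined (v i) S = joined (w i) S := by
        funext e
        cases e with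
        | inl j =>
          show liftMap n (A i) (bb i) (embL n (v i j)) = embL n (w i j)
          rw [liftMap_emb hn, hwdef]
          exact congrArg (embL n) (hUdef i (v i j)).symm
        | inr k =>
          show liftMap n (A i) (bb i) (Pi.single (k : Fin n) (1:ℝ)) = Pi.single (k : Fin n) (1:ℝ)
          exact liftMap_single (A i) (bb i) (k : Fin n) (hS _ k.2)
      rw [hfun]
    | none =>
      show id '' pieceFam m v none S = pieceFam m w none S
      rw [Set.image_id]
      rfl
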